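/- Cost of serving an expensive cluster through a dummy center placed on a valid ball: let ε ∈ (0, 1/2], let C ⊆ D be nonempty, c* ∈ F, let S ⊆ F be nonempty, and let ℓ be a point and a, ρ reals with: d(ℓ,c*) ≤ a; (1−ε)·|C|·a ≤ Σ_{p∈C} d(p,c*); and a ≤ ρ ≤ a + (ε/|C|)·Σ_{p∈C} ( d(p,c*) + d(p,S) ). Then Σ_{p∈C} ( d(p,ℓ) + ρ ) ≤ (3+5ε)·Σ_{p∈C} d(p,c*) + ε·Σ_{p∈C} d(p,S). -/

import Mathlib

open Finset

/-- `d(p,S)`: distance from `p` to the closest point of `S` (junk `0` if `S = ∅`). -/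
noncomputable def dS {X : Type*} [MetricSpace X] (p : X) (S : Finset X) : ℝ :=
  if h : S.Nonempty then S.inf' h (fun c => dist p c) else 0

/-- Cost of serving an expensive cluster through a dummy center placed on a valid ball:
if `ℓ` is a leader of the cluster `C` with center `c*` (`d(ℓ,c*) ≤ a`, with
`(1−ε)·|C|·a ≤ Σ_{p∈C} d(p,c*)`), and the radius `ρ` satisfies
`a ≤ ρ ≤ a + (ε/|C|)·Σ_{p∈C}(d(p,c*)+d(p,S))`, then
`Σ_{p∈C} (d(p,ℓ) + ρ) ≤ (3+5ε)·Σ_{p∈C} d(p,c*) + ε·Σ_{p∈C} d(p,S)`. -/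
theorem dummy_center_cost_bound {X : Type*} [MetricSpace X]
    (D F : Finset X)
    (ε : ℝ) (hε0 : 0 < ε) (hε1 : ε ≤ 1 / 2)
    (C : Finset X) (hCne : C.Nonempty) (hCD : C ⊆ D)
    (cstar : X) (hcF : cstar ∈ F)
    (S : Finset X) (hSne : S.Nonempty) (hSF : S ⊆ F)
    (ℓ : X) (a ρ : ℝ)
    (hℓ : dist ℓ cstar ≤ a)
    (ha : (1 - ε) * (C.card : ℝ) * a ≤ ∑ p ∈ C, dist p cstar)
    (hρ1 : a ≤ ρ)
    (hρ2 : ρ ≤ a + (ε / (C.card : ℝ)) * ∑ p ∈ C, (dist p cstar + dS p S)) :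
    ∑ p ∈ C, (dist p ℓ + ρ)
      ≤ (3 + 5 * ε) * (∑ p ∈ C, dist p cstar) + ε * ∑ p ∈ C, dS p S := by

  have hn0 : (0:ℝ) < (C.card : ℝ) := by exact_mod_cast hCne.card_pos
  set n : ℝ := (C.card : ℝ)
  set D1 : ℝ := ∑ p ∈ C, dist p cstar with hD1
  set D2 : ℝ := ∑ p ∈ C, dS p S with hD2
  have hsplit : ∑ p ∈ C, (dist p cstar + dS p S) = D1 + D2 := by
    rw [Finset.sum_add_distrib]
  have ha0 : 0 ≤ a := le_trans dist_nonneg hℓ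
  have hD1nn : 0 ≤ D1 := Finset.sum_nonneg fun p _ => dist_nonneg
  have h1 : ∑ p ∈ C, dist p ℓ ≤ D1 + n * a := by
    have step : ∀ p ∈ C, dist p ℓ ≤ dist p cstar + a := by
      intro p hp
      have h3 : dist cstar ℓ ≤ a := by rw [dist_comm]; exact hℓ
      have := dist_triangle p cstar ℓ
      linarith
    calc ∑ p ∈ C, dist p ℓ ≤ ∑ p ∈ C, (dist p cstar + a) := Finset.sum_le_sum step
      _ = D1 + n * a := by rw [Finset.sum_add_distrib, Finset.sum_const, nsmul_eq_mul]
  have h2 : n * ρ ≤ n * a + ε * (D1 + D2) := by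
    have := mul_le_mul_of_nonneg_left hρ2 (le_of_lt hn0)
    rw [hsplit] at this
    calc n * ρ ≤ n * (a + ε / n * (D1 + D2)) := this
      _ = n * a + ε * (D1 + D2) := by field_simp
  have hgoal : ∑ p ∈ C, (dist p ℓ + ρ) = (∑ p ∈ C, dist p ℓ) + n * ρ := by
    rw [Finset.sum_add_distrib, Finset.sum_const, nsmul_eq_mul]
  rw [hgoal]
  nlinarith [mul_nonneg (mul_nonneg hε0.le (mul_nonneg hn0.le ha0)) (by linarith : (0:ℝ) ≤ 1 - 2*ε), mul_nonneg hn0.le ha0]
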